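/- Let 1 < q < ∞. There exists a constant c, depending only on n, p and q (one may take c = q 2^{q+1} 5^{n+p}/(q−1)), such that for every locally integrable function f on ℝ^{n+1}, ∫_{ℝ^{n+1}} (M^+f)^q ≤ c ∫_{ℝ^{n+1}} |f|^q. -/

import Mathlib

open MeasureTheory Set ENNReal

noncomputable section

/-- The spatial cube `Q(x,L)` with center `x` and side length `L`. -/
def parQ (n : ℕ) (x : Fin n → ℝ) (L : ℝ) : Set (Fin n → ℝ) :=
  {y | ∀ i, |y i - x i| ≤ L / 2}

/-- Lower part `R^-(γ)` of the parabolic rectangle `R(x,t,L)`. -/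
def pMinus (n : ℕ) (p γ : ℝ) (x : Fin n → ℝ) (t L : ℝ) : Set ((Fin n → ℝ) × ℝ) :=
  (parQ n x L) ×ˢ Set.Ioo (t - L ^ p) (t - γ * L ^ p)

/-- Upper part `R^+(γ)` of the parabolic rectangle `R(x,t,L)`. -/
def pPlus (n : ℕ) (p γ : ℝ) (x : Fin n → ℝ) (t L : ℝ) : Set ((Fin n → ℝ) × ℝ) :=
  (parQ n x L) ×ˢ Set.Ioo (t + γ * L ^ p) (t + L ^ p)

/-- The full parabolic rectangle `R(x,t,L)`. -/
def pRect (n : ℕ) (p : ℝ) (x : Fin n → ℝ) (t L : ℝ) : Set ((Fin n → ℝ) × ℝ) :=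
  (parQ n x L) ×ˢ Set.Ioo (t - L ^ p) (t + L ^ p)

/-- A weight: a nonnegative locally integrable function on `ℝ^{n+1}`. -/
def IsWeight (n : ℕ) (w : (Fin n → ℝ) × ℝ → ℝ) : Prop :=
  (∀ z, 0 ≤ w z) ∧ MeasureTheory.LocallyIntegrable w volume

/-- The uncentered forward-in-time parabolic maximal function. -/
def Mplus (n : ℕ) (p : ℝ) (f : (Fin n → ℝ) × ℝ → ℝ) (z : (Fin n → ℝ) × ℝ) : ℝ≥0∞ :=
  ⨆ (x : Fin n → ℝ) (t : ℝ) (L : ℝ) (_ : 0 < L) (_ : z ∈ pMinus n p 0 x t L),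
    ENNReal.ofReal (⨍ y in pPlus n p 0 x t L, |f y|)

namespace ParabolicAux

/-- Open spatial cube. -/
def parQo (n : ℕ) (x : Fin n → ℝ) (L : ℝ) : Set (Fin n → ℝ) :=
  {y | ∀ i, |y i - x i| < L / 2}

/-- Open-cube lower part. -/
def pMinusO (n : ℕ) (p : ℝ) (x : Fin n → ℝ) (t L : ℝ) : Set ((Fin n → ℝ) × ℝ) :=
  (parQo n x L) ×ˢ Set.Ioo (t - L ^ p) t

/-- The auxiliary maximal operator, with openness built into the lower part. -/
def MO (n : ℕ) (p : ℝ) (f : (Fin n → ℝ) × ℝ → ℝ) (z : (Fin n → ℝ) × ℝ) : ℝ≥0∞ :=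
  ⨆ (x : Fin n → ℝ) (t : ℝ) (L : ℝ) (_ : 0 < L) (_ : z ∈ pMinusO n p x t L),
    ENNReal.ofReal (⨍ y in pPlus n p 0 x t L, |f y|)

variable {n : ℕ} {p : ℝ}

lemma parQ_eq (x : Fin n → ℝ) (L : ℝ) :
    parQ n x L = Set.pi Set.univ (fun i => Icc (x i - L / 2) (x i + L / 2)) := by
  ext y
  simp only [parQ, mem_setOf_eq, mem_pi, mem_univ, true_implies, mem_Icc]
  refine forall_congr' fun i => ?_
  rw [abs_le]
  constructor <;> (intro h; constructor <;> linarith [h.1, h.2])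

lemma parQo_eq (x : Fin n → ℝ) (L : ℝ) :
    parQo n x L = Set.pi Set.univ (fun i => Ioo (x i - L / 2) (x i + L / 2)) := by
  ext y
  simp only [parQo, mem_setOf_eq, mem_pi, mem_univ, true_implies, mem_Ioo]
  refine forall_congr' fun i => ?_
  rw [abs_lt]
  constructor <;> (intro h; constructor <;> linarith [h.1, h.2])

lemma isOpen_pMinusO (x : Fin n → ℝ) (t L : ℝ) : IsOpen (pMinusO n p x t L) := by
  refine IsOpen.prod ?_ isOpen_Ioo
  rw [parQo_eq]
  exact isOpen_set_pi finite_univ (fun i _ => isOpen_Ioo)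

lemma measurableSet_parQ (x : Fin n → ℝ) (L : ℝ) : MeasurableSet (parQ n x L) := by
  rw [parQ_eq]
  exact MeasurableSet.univ_pi fun i => measurableSet_Icc

lemma measurableSet_pPlus (x : Fin n → ℝ) (t L : ℝ) :
    MeasurableSet (pPlus n p 0 x t L) :=
  (measurableSet_parQ x L).prod measurableSet_Ioo

lemma measurableSet_pRect (x : Fin n → ℝ) (t L : ℝ) :
    MeasurableSet (pRect n p x t L) :=
  (measurableSet_parQ x L).prod measurableSet_Ioo

lemma volume_parQ (x : Fin n → ℝ) {L : ℝ} (hL : 0 ≤ L) :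
    volume (parQ n x L) = ENNReal.ofReal L ^ n := by
  rw [parQ_eq, volume_pi_pi]
  have h : ∀ i : Fin n, volume (Icc (x i - L / 2) (x i + L / 2)) = ENNReal.ofReal L := by
    intro i
    rw [Real.volume_Icc]
    congr 1
    ring
  simp [h, Finset.prod_const]

lemma volume_pPlus (x : Fin n → ℝ) (t : ℝ) {L : ℝ} (hL : 0 ≤ L) :
    volume (pPlus n p 0 x t L) = ENNReal.ofReal L ^ n * ENNReal.ofReal (L ^ p) := by
  rw [pPlus, MeasureTheory.Measure.volume_eq_prod, Measure.prod_prod, volume_parQ x hL, Real.volume_Ioo]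
  congr 2
  ring

lemma volume_pRect (x : Fin n → ℝ) (t : ℝ) {L : ℝ} (hL : 0 ≤ L) :
    volume (pRect n p x t L) = 2 * (ENNReal.ofReal L ^ n * ENNReal.ofReal (L ^ p)) := by
  rw [pRect, MeasureTheory.Measure.volume_eq_prod, Measure.prod_prod, volume_parQ x hL, Real.volume_Ioo]
  have h : t + L ^ p - (t - L ^ p) = 2 * L ^ p := by ring
  rw [h, ENNReal.ofReal_mul (by norm_num)]
  simp only [ENNReal.ofReal_ofNat]
  ring

lemma volume_pPlus_ne_zero (hp : 0 < p) (x : Fin n → ℝ) (t : ℝ) {L : ℝ} (hL : 0 < L) :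
    volume (pPlus n p 0 x t L) ≠ 0 := by
  rw [volume_pPlus x t hL.le]
  have h1 : ENNReal.ofReal L ^ n ≠ 0 :=
    pow_ne_zero n (ENNReal.ofReal_pos.2 hL).ne'
  have h2 : ENNReal.ofReal (L ^ p) ≠ 0 :=
    (ENNReal.ofReal_pos.2 (Real.rpow_pos_of_pos hL p)).ne'
  exact mul_ne_zero h1 h2

lemma volume_pPlus_ne_top (x : Fin n → ℝ) (t : ℝ) {L : ℝ} (hL : 0 < L) :
    volume (pPlus n p 0 x t L) ≠ ∞ := by
  rw [volume_pPlus x t hL.le]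
  exact ENNReal.mul_ne_top (pow_ne_top ENNReal.ofReal_ne_top) ENNReal.ofReal_ne_top

lemma integrableOn_pPlus {f : (Fin n → ℝ) × ℝ → ℝ}
    (hf : LocallyIntegrable f volume) (x : Fin n → ℝ) (t L : ℝ) :
    IntegrableOn f (pPlus n p 0 x t L) volume := by
  have hcomp : IsCompact ((Set.pi Set.univ fun i => Icc (x i - L / 2) (x i + L / 2)) ×ˢ
      Icc (t + 0 * L ^ p) (t + L ^ p)) :=
    (isCompact_univ_pi fun i => isCompact_Icc).prod isCompact_Icc
  refine (hf.integrableOn_isCompact hcomp).mono_set ?_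
  rw [pPlus, parQ_eq]
  exact Set.prod_mono subset_rfl Ioo_subset_Icc_self

/-- Bridge between real set-averages and lintegrals. -/
lemma ofReal_avg {f : (Fin n → ℝ) × ℝ → ℝ} {S : Set ((Fin n → ℝ) × ℝ)}
    (h0 : volume S ≠ 0) (hT : volume S ≠ ⊤) (hi : IntegrableOn f S volume) :
    ENNReal.ofReal (⨍ y in S, |f y|) = (∫⁻ y in S, ENNReal.ofReal |f y|) / volume S := by
  rw [setAverage_eq, measureReal_def, smul_eq_mul,
    ENNReal.ofReal_mul (inv_nonneg.mpr ENNReal.toReal_nonneg),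
    ofReal_integral_eq_lintegral_ofReal hi.abs (Filter.Eventually.of_forall fun y => abs_nonneg _),
    ENNReal.ofReal_inv_of_pos (ENNReal.toReal_pos h0 hT),
    ENNReal.ofReal_toReal hT, ENNReal.div_eq_inv_mul]

lemma measurable_MO (f : (Fin n → ℝ) × ℝ → ℝ) : Measurable (MO n p f) := by
  apply measurable_of_Ioi
  intro c
  have h : MO n p f ⁻¹' Ioi c = ⋃ (x : Fin n → ℝ) (t : ℝ) (L : ℝ) (_ : 0 < L)
      (_ : c < ENNReal.ofReal (⨍ y in pPlus n p 0 x t L, |f y|)), pMinusO n p x t L := by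
    ext z
    simp only [mem_preimage, mem_Ioi, MO, lt_iSup_iff, mem_iUnion]
    tauto
  rw [h]
  refine IsOpen.measurableSet ?_
  exact isOpen_iUnion fun x => isOpen_iUnion fun t => isOpen_iUnion fun L =>
    isOpen_iUnion fun _ => isOpen_iUnion fun _ => isOpen_pMinusO x t L

lemma pPlus_mono (hp0 : 0 ≤ p) (x : Fin n → ℝ) (t : ℝ) {L L' : ℝ} (hL : 0 < L) (hLL : L ≤ L') :
    pPlus n p 0 x t L ⊆ pPlus n p 0 x t L' := by
  rintro ⟨y, s⟩ ⟨h1, h2⟩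
  simp only [mem_Ioo, zero_mul, add_zero] at h2
  have hLp : L ^ p ≤ L' ^ p := Real.rpow_le_rpow hL.le hLL hp0
  constructor
  · intro i
    exact (h1 i).trans (by linarith)
  · simp only [mem_Ioo, zero_mul, add_zero]
    exact ⟨h2.1, h2.2.trans_le (by linarith)⟩

/-- Comparison of `Mplus` with the open-cube maximal operator `MO`. -/
lemma Mplus_le_MO (hp : 1 < p) {f : (Fin n → ℝ) × ℝ → ℝ}
    (hfi : ∀ x t L, IntegrableOn f (pPlus n p 0 x t L) volume)
    (z : (Fin n → ℝ) × ℝ) :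
    Mplus n p f z ≤ ENNReal.ofReal (2 ^ n * 2 ^ p) * MO n p f z := by
  have hp0 : (0:ℝ) < p := lt_trans one_pos hp
  refine iSup_le fun x => iSup_le fun t => iSup_le fun L => iSup_le fun hL =>
    iSup_le fun hz => ?_
  have hz1 : z.1 ∈ parQ n x L := hz.1
  have hz2 : z.2 ∈ Ioo (t - L ^ p) (t - 0 * L ^ p) := hz.2
  rw [zero_mul, sub_zero] at hz2
  have h2L : (0:ℝ) < 2 * L := by linarith
  have hLp : L ^ p ≤ (2 * L) ^ p :=
    Real.rpow_le_rpow hL.le (by linarith) hp0.le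
  have hmem : z ∈ pMinusO n p x t (2 * L) := by
    constructor
    · intro i
      exact lt_of_le_of_lt (hz1 i) (by linarith)
    · exact ⟨by linarith [hz2.1], hz2.2⟩
  set S := pPlus n p 0 x t L with hS
  set T := pPlus n p 0 x t (2 * L) with hT
  have hsub : S ⊆ T := pPlus_mono hp0.le x t hL (by linarith)
  have hS0 : volume S ≠ 0 := volume_pPlus_ne_zero hp0 x t hL
  have hSt : volume S ≠ ⊤ := volume_pPlus_ne_top x t hL
  have hT0 : volume T ≠ 0 := volume_pPlus_ne_zero hp0 x t h2L
  have hTt : volume T ≠ ⊤ := volume_pPlus_ne_top x t h2L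
  set c : ℝ≥0∞ := ENNReal.ofReal (2 ^ n * 2 ^ p) with hc
  have hc0 : c ≠ 0 := by
    rw [hc]
    simp only [ne_eq, ENNReal.ofReal_eq_zero, not_le]
    positivity
  have hct : c ≠ ⊤ := ENNReal.ofReal_ne_top
  have hvolT : volume T = c * volume S := by
    rw [volume_pPlus x t hL.le, volume_pPlus x t h2L.le, hc]
    have e1 : ENNReal.ofReal (2 * L) = ENNReal.ofReal 2 * ENNReal.ofReal L :=
      ENNReal.ofReal_mul (by norm_num)
    have e2 : ENNReal.ofReal ((2 * L) ^ p) = ENNReal.ofReal (2 ^ p) * ENNReal.ofReal (L ^ p) := by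
      rw [Real.mul_rpow (by norm_num) hL.le, ENNReal.ofReal_mul (by positivity)]
    have e3 : ENNReal.ofReal ((2:ℝ) ^ n * 2 ^ p) =
        ENNReal.ofReal 2 ^ n * ENNReal.ofReal (2 ^ p) := by
      rw [ENNReal.ofReal_mul (by positivity), ENNReal.ofReal_pow (by norm_num)]
    rw [e1, e2, e3, mul_pow]
    ring
  have key : ENNReal.ofReal (⨍ y in S, |f y|) ≤ c * ENNReal.ofReal (⨍ y in T, |f y|) := by
    rw [ofReal_avg hS0 hSt (hfi x t L), ofReal_avg hT0 hTt (hfi x t (2 * L))]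
    calc (∫⁻ y in S, ENNReal.ofReal |f y|) / volume S
        ≤ (∫⁻ y in T, ENNReal.ofReal |f y|) / volume S :=
          ENNReal.div_le_div_right (lintegral_mono_set hsub) _
      _ = c * ((∫⁻ y in T, ENNReal.ofReal |f y|) / volume T) := by
          rw [hvolT, ← ENNReal.mul_div_mul_left _ _ hc0 hct (c := c),
            div_eq_mul_inv, div_eq_mul_inv, mul_assoc]
  refine key.trans (mul_le_mul_right ?_ c)
  exact le_iSup_of_le x (le_iSup_of_le t (le_iSup_of_le (2 * L)
    (le_iSup_of_le h2L (le_iSup_of_le hmem le_rfl))))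

/-- Truncation inequality for `MO`. -/
lemma MO_le_truncate (hp : 1 < p) {f : (Fin n → ℝ) × ℝ → ℝ} (hfm : Measurable f)
    (hfi : ∀ x t L, IntegrableOn f (pPlus n p 0 x t L) volume)
    {c : ℝ} (hc : 0 ≤ c) (z : (Fin n → ℝ) × ℝ) :
    MO n p f z ≤ MO n p (fun y => if c < |f y| then f y else 0) z + ENNReal.ofReal c := by
  have hp0 : (0:ℝ) < p := lt_trans one_pos hp
  set g : (Fin n → ℝ) × ℝ → ℝ := fun y => if c < |f y| then f y else 0 with hg
  refine iSup_le fun x => iSup_le fun t => iSup_le fun L => iSup_le fun hL =>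
    iSup_le fun hz => ?_
  set S := pPlus n p 0 x t L with hS
  have hS0 : volume S ≠ 0 := volume_pPlus_ne_zero hp0 x t hL
  have hSt : volume S ≠ ⊤ := volume_pPlus_ne_top x t hL
  have hfS : IntegrableOn f S volume := hfi x t L
  have hgm : Measurable g := Measurable.ite (measurableSet_lt measurable_const hfm.abs)
    hfm measurable_const
  have hgS : IntegrableOn g S volume := by
    refine Integrable.mono hfS hgm.aestronglyMeasurable (Filter.Eventually.of_forall fun y => ?_)
    simp only [hg, Real.norm_eq_abs]
    by_cases h : c < |f y|
    · rw [if_pos h]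
    · rw [if_neg h]; simp [abs_nonneg]
  have hVpos : 0 < (volume S).toReal := ENNReal.toReal_pos hS0 hSt
  have havg : ⨍ y in S, |f y| ≤ (⨍ y in S, |g y|) + c := by
    have hpt : ∀ y, |f y| ≤ |g y| + c := by
      intro y
      by_cases h : c < |f y|
      · simp only [hg, if_pos h]; linarith
      · push_neg at h
        simp only [hg, if_neg (not_lt.mpr (le_of_not_gt (by simpa using h)))]
        simp only [abs_zero]
        linarith
    have h1 : ∫ y in S, |f y| ≤ ∫ y in S, (|g y| + c) := by
      refine integral_mono hfS.abs (hgS.abs.add ?_) hpt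
      exact integrableOn_const hSt
    rw [integral_add hgS.abs (integrableOn_const hSt),
      setIntegral_const, smul_eq_mul] at h1
    rw [setAverage_eq, setAverage_eq, smul_eq_mul, smul_eq_mul]
    have h2 : (volume S).toReal⁻¹ * (∫ y in S, |f y|) ≤
        (volume S).toReal⁻¹ * ((∫ y in S, |g y|) + (volume S).toReal * c) :=
      mul_le_mul_of_nonneg_left h1 (by positivity)
    calc (volume S).toReal⁻¹ * ∫ y in S, |f y|
        ≤ (volume S).toReal⁻¹ * ((∫ y in S, |g y|) + (volume S).toReal * c) := h2
      _ = (volume S).toReal⁻¹ * (∫ y in S, |g y|) + c := by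
          field_simp
  have havg' : ENNReal.ofReal (⨍ y in S, |f y|) ≤
      ENNReal.ofReal (⨍ y in S, |g y|) + ENNReal.ofReal c := by
    refine (ENNReal.ofReal_le_ofReal havg).trans ?_
    rw [ENNReal.ofReal_add ?_ hc]
    · rw [setAverage_eq, smul_eq_mul]
      positivity
  refine havg'.trans (add_le_add_left ?_ _)
  exact le_iSup_of_le x (le_iSup_of_le t (le_iSup_of_le L
    (le_iSup_of_le hL (le_iSup_of_le hz le_rfl))))

lemma pMinusO_subset_pRect {x : Fin n → ℝ} {t L : ℝ} (hL : 0 < L) (hp0 : 0 < p) :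
    pMinusO n p x t L ⊆ pRect n p x t L := by
  rintro ⟨y, s⟩ ⟨h1, h2⟩
  have hLp : 0 < L ^ p := Real.rpow_pos_of_pos hL p
  exact ⟨fun i => (h1 i).le, ⟨h2.1, h2.2.trans (by linarith)⟩⟩

lemma pPlus_subset_pRect {x : Fin n → ℝ} {t L : ℝ} (hL : 0 < L) :
    pPlus n p 0 x t L ⊆ pRect n p x t L := by
  rintro ⟨y, s⟩ ⟨h1, h2⟩
  simp only [mem_Ioo, zero_mul, add_zero] at h2
  have hLp : 0 < L ^ p := Real.rpow_pos_of_pos hL p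
  exact ⟨h1, ⟨by linarith [h2.1], h2.2⟩⟩

lemma pRect_nonempty {x : Fin n → ℝ} {t L : ℝ} (hL : 0 < L) :
    (pRect n p x t L).Nonempty := by
  have hLp : 0 < L ^ p := Real.rpow_pos_of_pos hL p
  refine ⟨(x, t), fun i => ?_, ?_⟩
  · simp only [sub_self, abs_zero]
    linarith
  · exact ⟨by linarith, by linarith⟩

/-- The enlargement lemma for intersecting parabolic rectangles. -/
lemma rect_enlarge (hp : 1 < p) {x x' : Fin n → ℝ} {t t' L L' : ℝ}
    (hL : 0 < L) (hL' : 0 < L')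
    (hne : (pRect n p x t L ∩ pRect n p x' t' L').Nonempty) (hLL : L ≤ 2 * L') :
    pRect n p x t L ⊆ pRect n p x' t' (6 * L') := by
  obtain ⟨w, hw1, hw2⟩ := hne
  have hp0 : (0:ℝ) < p := lt_trans one_pos hp
  -- key real inequality : 2 * L^p + L'^p ≤ (6*L')^p
  have hkey : 2 * L ^ p + L' ^ p ≤ (6 * L') ^ p := by
    have h1 : L ^ p ≤ (2 * L') ^ p := Real.rpow_le_rpow hL.le hLL hp0.le
    have h2 : (2 * L') ^ p = 2 ^ p * L' ^ p := Real.mul_rpow (by norm_num) hL'.le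
    have h3 : (6 * L') ^ p = 6 ^ p * L' ^ p := Real.mul_rpow (by norm_num) hL'.le
    have h4 : (6:ℝ) ^ p = 3 ^ p * 2 ^ p := by
      rw [← Real.mul_rpow (by norm_num) (by norm_num)]
      norm_num
    have h5 : (3:ℝ) ≤ 3 ^ p := by
      calc (3:ℝ) = 3 ^ (1:ℝ) := (Real.rpow_one 3).symm
        _ ≤ 3 ^ p := Real.rpow_le_rpow_of_exponent_le (by norm_num) hp.le
    have h6 : (1:ℝ) ≤ 2 ^ p := by
      calc (1:ℝ) = 2 ^ (0:ℝ) := (Real.rpow_zero 2).symm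
        _ ≤ 2 ^ p := Real.rpow_le_rpow_of_exponent_le (by norm_num) hp0.le
    have hLp' : 0 < L' ^ p := Real.rpow_pos_of_pos hL' p
    have h2p : (0:ℝ) < 2 ^ p := Real.rpow_pos_of_pos (by norm_num) p
    have h7 : L' ^ p ≤ 2 ^ p * L' ^ p := by
      have := mul_le_mul_of_nonneg_right h6 hLp'.le
      linarith
    have h9 : 3 * (2 ^ p * L' ^ p) ≤ 3 ^ p * (2 ^ p * L' ^ p) :=
      mul_le_mul_of_nonneg_right h5 (by positivity)
    rw [h3, h4]
    nlinarith [h1, h2, h7, h9]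
  rintro ⟨y, s⟩ ⟨hy, hs⟩
  have hLp : 0 < L ^ p := Real.rpow_pos_of_pos hL p
  have hLp' : 0 < L' ^ p := Real.rpow_pos_of_pos hL' p
  constructor
  · intro i
    have h1 := hy i
    have h2 := hw1.1 i
    have h3 := hw2.1 i
    have e1 : |y i - x' i| ≤ |y i - x i| + |x i - w.1 i| + |w.1 i - x' i| := by
      calc |y i - x' i| ≤ |y i - w.1 i| + |w.1 i - x' i| := abs_sub_le _ _ _
        _ ≤ (|y i - x i| + |x i - w.1 i|) + |w.1 i - x' i| := by
            have := abs_sub_le (y i) (x i) (w.1 i)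
            linarith
    have e2 : |x i - w.1 i| = |w.1 i - x i| := abs_sub_comm _ _
    show |y i - x' i| ≤ 6 * L' / 2
    rw [e2] at e1
    have h1' : |y i - x i| ≤ L / 2 := h1
    linarith [e1, h1', h2, h3]
  · have hs1 := hs.1
    have hs2 := hs.2
    have hw1t := hw1.2
    have hw2t := hw2.2
    simp only [mem_Ioo] at hs1 hs2 hw1t hw2t ⊢
    constructor
    · linarith [hs1, hw1t.2, hw2t.1, hkey]
    · linarith [hs2, hw1t.1, hw2t.2, hkey]

/-- Weak type estimate for `MO`. -/
lemma weak_type (hp : 1 < p) {f : (Fin n → ℝ) × ℝ → ℝ}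
    (hfi : ∀ x t L, IntegrableOn f (pPlus n p 0 x t L) volume)
    {lam : ℝ≥0∞} (h0 : lam ≠ 0) (htop : lam ≠ ⊤) :
    lam * volume {z | lam < MO n p f z} ≤
      ENNReal.ofReal (2 * 6 ^ n * 6 ^ p) * ∫⁻ z, ENNReal.ofReal |f z| := by
  classical
  have hp0 : (0:ℝ) < p := lt_trans one_pos hp
  set I := ∫⁻ z, ENNReal.ofReal |f z| with hI
  set K : ℝ≥0∞ := ENNReal.ofReal (2 * 6 ^ n * 6 ^ p) with hK
  have hK0 : K ≠ 0 := by
    rw [hK]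
    simp only [ne_eq, ENNReal.ofReal_eq_zero, not_le]
    positivity
  by_cases hItop : I = ⊤
  · rw [hItop, ENNReal.mul_top hK0]
    exact le_top
  -- index type and family
  set T : Set ((Fin n → ℝ) × ℝ × ℝ) :=
    {w | 0 < w.2.2 ∧ lam < ENNReal.ofReal (⨍ y in pPlus n p 0 w.1 w.2.1 w.2.2, |f y|)} with hT
  set B : (Fin n → ℝ) × ℝ × ℝ → Set ((Fin n → ℝ) × ℝ) :=
    fun w => pRect n p w.1 w.2.1 w.2.2 with hB
  have key : ∀ w ∈ T, lam * volume (pPlus n p 0 w.1 w.2.1 w.2.2) ≤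
      ∫⁻ y in pPlus n p 0 w.1 w.2.1 w.2.2, ENNReal.ofReal |f y| := by
    rintro ⟨x, t, L⟩ ⟨hL, hlt⟩
    have hS0 := volume_pPlus_ne_zero hp0 x t hL
    have hSt := volume_pPlus_ne_top (p := p) x t (L := L) hL
    rw [ofReal_avg hS0 hSt (hfi x t L)] at hlt
    calc lam * volume (pPlus n p 0 x t L)
        ≤ ((∫⁻ y in pPlus n p 0 x t L, ENNReal.ofReal |f y|) / volume (pPlus n p 0 x t L)) *
            volume (pPlus n p 0 x t L) :=
          mul_le_mul_left hlt.le _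
      _ = ∫⁻ y in pPlus n p 0 x t L, ENNReal.ofReal |f y| :=
          ENNReal.div_mul_cancel hS0 hSt
  set Rbd : ℝ := max 1 (I / lam).toReal with hRbd
  have hdle : ∀ w ∈ T, w.2.2 ≤ Rbd := by
    rintro ⟨x, t, L⟩ ⟨hL, hlt⟩
    rcases le_or_gt L 1 with h1 | h1
    · exact h1.trans (le_max_left _ _)
    · have hkey := key ⟨x, t, L⟩ ⟨hL, hlt⟩
      have hle : ∫⁻ y in pPlus n p 0 x t L, ENNReal.ofReal |f y| ≤ I :=
        setLIntegral_le_lintegral _ _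
      have hvol : ENNReal.ofReal L ≤ volume (pPlus n p 0 x t L) := by
        rw [volume_pPlus x t hL.le]
        calc ENNReal.ofReal L = 1 * ENNReal.ofReal L := (one_mul _).symm
          _ ≤ ENNReal.ofReal L ^ n * ENNReal.ofReal (L ^ p) := by
              refine mul_le_mul' (one_le_pow_of_one_le' ?_ n) (ENNReal.ofReal_le_ofReal ?_)
              · exact ENNReal.one_le_ofReal.2 h1.le
              · calc L = L ^ (1:ℝ) := (Real.rpow_one L).symm
                  _ ≤ L ^ p := Real.rpow_le_rpow_of_exponent_le h1.le hp.le
      have h2 : ENNReal.ofReal L * lam ≤ I := by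
        calc ENNReal.ofReal L * lam = lam * ENNReal.ofReal L := mul_comm _ _
          _ ≤ lam * volume (pPlus n p 0 x t L) := mul_le_mul_right hvol _
          _ ≤ I := hkey.trans hle
      have h3 : ENNReal.ofReal L ≤ I / lam :=
        (ENNReal.le_div_iff_mul_le (Or.inl h0) (Or.inl htop)).2 h2
      have h4 : I / lam ≠ ⊤ := by
        intro hcon
        exact hItop (by
          have := ENNReal.div_eq_top.1 hcon
          rcases this with ⟨_, h⟩ | ⟨h, _⟩
          · exact absurd h h0
          · exact h)
      have h5 : L ≤ (I / lam).toReal := by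
        have := ENNReal.toReal_mono h4 h3
        rwa [ENNReal.toReal_ofReal (by linarith)] at this
      exact h5.trans (le_max_right _ _)
  have hne : ∀ w ∈ T, (B w).Nonempty := by
    rintro ⟨x, t, L⟩ ⟨hL, _⟩
    exact pRect_nonempty hL
  obtain ⟨u, huT, hudisj, hucov⟩ :=
    Vitali.exists_disjoint_subfamily_covering_enlargement B T (fun w => w.2.2) 2
      (by norm_num) (fun w hw => (hw.1).le) Rbd hdle hne
  -- countability of u
  have hu_cnt : u.Countable := by
    have hmble : ∀ b : ↥u, MeasurableSet (B (b : (Fin n → ℝ) × ℝ × ℝ)) := fun b =>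
      measurableSet_pRect _ _ _
    have hdisj : Pairwise (Function.onFun Disjoint fun b : ↥u => B (b : (Fin n → ℝ) × ℝ × ℝ)) := by
      intro a b hab
      exact hudisj a.2 b.2 (fun h => hab (Subtype.ext h))
    have hcnt := Measure.countable_meas_pos_of_disjoint_iUnion (μ := (volume :
      Measure ((Fin n → ℝ) × ℝ))) hmble hdisj
    have huniv : {i : ↥u | 0 < volume (B (i : (Fin n → ℝ) × ℝ × ℝ))} = Set.univ := by
      refine eq_univ_of_forall fun b => ?_
      have hbL : 0 < (b : (Fin n → ℝ) × ℝ × ℝ).2.2 := (huT b.2).1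
      have h1 : volume (pPlus n p 0 (b : (Fin n → ℝ) × ℝ × ℝ).1
          (b : (Fin n → ℝ) × ℝ × ℝ).2.1 (b : (Fin n → ℝ) × ℝ × ℝ).2.2) ≠ 0 :=
        volume_pPlus_ne_zero hp0 _ _ hbL
      have h2 : volume (pPlus n p 0 (b : (Fin n → ℝ) × ℝ × ℝ).1
          (b : (Fin n → ℝ) × ℝ × ℝ).2.1 (b : (Fin n → ℝ) × ℝ × ℝ).2.2) ≤
          volume (B (b : (Fin n → ℝ) × ℝ × ℝ)) :=
        measure_mono (pPlus_subset_pRect (p := p) hbL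
          (x := (b : (Fin n → ℝ) × ℝ × ℝ).1) (t := (b : (Fin n → ℝ) × ℝ × ℝ).2.1))
      exact lt_of_lt_of_le (pos_iff_ne_zero.mpr h1) h2
    rw [huniv] at hcnt
    have : Countable ↥u := Set.countable_univ_iff.mp hcnt
    exact Set.countable_coe_iff.mp this
  haveI : Countable ↥u := hu_cnt.to_subtype
  -- covering
  have hcover : {z | lam < MO n p f z} ⊆
      ⋃ b : ↥u, pRect n p (b : (Fin n → ℝ) × ℝ × ℝ).1 (b : (Fin n → ℝ) × ℝ × ℝ).2.1
        (6 * (b : (Fin n → ℝ) × ℝ × ℝ).2.2) := by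
    intro z hz
    simp only [mem_setOf_eq, MO, lt_iSup_iff] at hz
    obtain ⟨x, t, L, hL, hzmem, hlt⟩ := hz
    have haT : ((x, t, L) : (Fin n → ℝ) × ℝ × ℝ) ∈ T := ⟨hL, hlt⟩
    obtain ⟨b, hbu, hbint, hbL⟩ := hucov _ haT
    have hbL0 : 0 < b.2.2 := (huT hbu).1
    have hzB : z ∈ B ((x, t, L) : (Fin n → ℝ) × ℝ × ℝ) :=
      pMinusO_subset_pRect hL hp0 hzmem
    have hsub := rect_enlarge hp hL hbL0 hbint hbL
    exact mem_iUnion.2 ⟨⟨b, hbu⟩, hsub hzB⟩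
  -- volume of enlarged rectangles
  have hvol6 : ∀ b ∈ u, volume (pRect n p b.1 b.2.1 (6 * b.2.2)) =
      K * volume (pPlus n p 0 b.1 b.2.1 b.2.2) := by
    intro b hbu
    have hbL : 0 < b.2.2 := (huT hbu).1
    have h6L : (0:ℝ) < 6 * b.2.2 := by linarith
    rw [volume_pRect _ _ h6L.le, volume_pPlus _ _ hbL.le, hK]
    have e1 : ENNReal.ofReal (6 * b.2.2) = ENNReal.ofReal 6 * ENNReal.ofReal b.2.2 :=
      ENNReal.ofReal_mul (by norm_num)
    have e2 : ENNReal.ofReal ((6 * b.2.2) ^ p) =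
        ENNReal.ofReal (6 ^ p) * ENNReal.ofReal (b.2.2 ^ p) := by
      rw [Real.mul_rpow (by norm_num) hbL.le, ENNReal.ofReal_mul (by positivity)]
    have e3 : ENNReal.ofReal (2 * (6:ℝ) ^ n * 6 ^ p) =
        2 * ENNReal.ofReal 6 ^ n * ENNReal.ofReal (6 ^ p) := by
      rw [ENNReal.ofReal_mul (by positivity), ENNReal.ofReal_mul (by positivity),
        ENNReal.ofReal_pow (by norm_num)]
      norm_num
    rw [e1, e2, e3, mul_pow]
    ring
  -- put it together
  calc lam * volume {z | lam < MO n p f z}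
      ≤ lam * volume (⋃ b : ↥u, pRect n p (b : (Fin n → ℝ) × ℝ × ℝ).1
          (b : (Fin n → ℝ) × ℝ × ℝ).2.1 (6 * (b : (Fin n → ℝ) × ℝ × ℝ).2.2)) :=
        mul_le_mul_right (measure_mono hcover) _
    _ ≤ lam * ∑' b : ↥u, volume (pRect n p (b : (Fin n → ℝ) × ℝ × ℝ).1
          (b : (Fin n → ℝ) × ℝ × ℝ).2.1 (6 * (b : (Fin n → ℝ) × ℝ × ℝ).2.2)) :=
        mul_le_mul_right (measure_iUnion_le _) _
    _ = ∑' b : ↥u, lam * volume (pRect n p (b : (Fin n → ℝ) × ℝ × ℝ).1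
          (b : (Fin n → ℝ) × ℝ × ℝ).2.1 (6 * (b : (Fin n → ℝ) × ℝ × ℝ).2.2)) :=
        ENNReal.tsum_mul_left.symm
    _ ≤ ∑' b : ↥u, K * (∫⁻ y in pPlus n p 0 (b : (Fin n → ℝ) × ℝ × ℝ).1
          (b : (Fin n → ℝ) × ℝ × ℝ).2.1 (b : (Fin n → ℝ) × ℝ × ℝ).2.2,
          ENNReal.ofReal |f y|) := by
        refine ENNReal.tsum_le_tsum fun b => ?_
        rw [hvol6 _ b.2, ← mul_assoc, mul_comm lam K, mul_assoc]
        exact mul_le_mul_right (key _ (huT b.2)) _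
    _ = K * ∑' b : ↥u, ∫⁻ y in pPlus n p 0 (b : (Fin n → ℝ) × ℝ × ℝ).1
          (b : (Fin n → ℝ) × ℝ × ℝ).2.1 (b : (Fin n → ℝ) × ℝ × ℝ).2.2,
          ENNReal.ofReal |f y| := ENNReal.tsum_mul_left
    _ ≤ K * I := by
        refine mul_le_mul_right ?_ _
        have hdisj' : Pairwise (Function.onFun Disjoint fun b : ↥u =>
            pPlus n p 0 (b : (Fin n → ℝ) × ℝ × ℝ).1 (b : (Fin n → ℝ) × ℝ × ℝ).2.1
              (b : (Fin n → ℝ) × ℝ × ℝ).2.2) := by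
          intro a b hab
          have h := hudisj a.2 b.2 (fun h => hab (Subtype.ext h))
          exact h.mono (pPlus_subset_pRect (huT a.2).1) (pPlus_subset_pRect (huT b.2).1)
        rw [← lintegral_iUnion (fun b => measurableSet_pPlus _ _ _) hdisj']
        exact setLIntegral_le_lintegral _ _

lemma cut_bound {q : ℝ} (hq : 1 < q) {f : (Fin n → ℝ) × ℝ → ℝ} {c : ℝ} (hc : 0 < c) :
    (∫⁻ z, ENNReal.ofReal |if c < |f z| then f z else 0|) ≤
      ENNReal.ofReal (c ^ (1 - q)) * ∫⁻ z, ENNReal.ofReal (|f z| ^ q) := by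
  rw [← lintegral_const_mul' _ _ ENNReal.ofReal_ne_top]
  refine lintegral_mono fun z => ?_
  by_cases h : c < |f z|
  · rw [if_pos h, ← ENNReal.ofReal_mul (Real.rpow_nonneg hc.le _)]
    apply ENNReal.ofReal_le_ofReal
    have ha : 0 < |f z| := lt_trans hc h
    have h1 : c ^ (q - 1) ≤ |f z| ^ (q - 1) :=
      Real.rpow_le_rpow hc.le h.le (by linarith)
    have h2 : c ^ (1 - q) * c ^ (q - 1) = 1 := by
      rw [← Real.rpow_add hc]
      norm_num
    have h3 : |f z| ^ q = |f z| ^ (q - 1) * |f z| := by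
      have e := (Real.rpow_add ha (q - 1) 1).symm
      rw [Real.rpow_one] at e
      rw [e, show q - 1 + 1 = q by ring]
    have h4 : c ^ (1 - q) * c ^ (q - 1) ≤ c ^ (1 - q) * |f z| ^ (q - 1) :=
      mul_le_mul_of_nonneg_left h1 (Real.rpow_nonneg hc.le _)
    have h5 : c ^ (1 - q) * c ^ (q - 1) * |f z| ≤ c ^ (1 - q) * |f z| ^ (q - 1) * |f z| :=
      mul_le_mul_of_nonneg_right h4 ha.le
    rw [h2, one_mul] at h5
    calc |f z| ≤ c ^ (1 - q) * |f z| ^ (q - 1) * |f z| := h5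
      _ = c ^ (1 - q) * |f z| ^ q := by rw [h3]; ring
  · rw [if_neg h]
    simp

/-- `MO f` is a.e. finite when `∫ |f|^q < ∞`. -/
lemma MO_ae_lt_top (hp : 1 < p) {q : ℝ} (hq : 1 < q) {f : (Fin n → ℝ) × ℝ → ℝ}
    (hfm : Measurable f)
    (hfi : ∀ x t L, IntegrableOn f (pPlus n p 0 x t L) volume)
    (hIq : (∫⁻ z, ENNReal.ofReal (|f z| ^ q)) ≠ ⊤) :
    volume {z | MO n p f z = ⊤} = 0 := by
  set Iq := ∫⁻ z, ENNReal.ofReal (|f z| ^ q) with hIqdef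
  set K : ℝ≥0∞ := ENNReal.ofReal (2 * 6 ^ n * 6 ^ p) with hK
  set D : ℝ≥0∞ := K * Iq with hD
  have hDt : D ≠ ⊤ := ENNReal.mul_ne_top ENNReal.ofReal_ne_top hIq
  set μinf := volume {z | MO n p f z = ⊤} with hμ
  -- For every c ≥ 1 : ofReal c * μinf ≤ D
  have hbound : ∀ c : ℝ, 1 ≤ c → ENNReal.ofReal c * μinf ≤ D := by
    intro c hc1
    have hc0 : (0:ℝ) < c := lt_of_lt_of_le one_pos hc1
    set g : (Fin n → ℝ) × ℝ → ℝ := fun y => if c < |f y| then f y else 0 with hg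
    have hgi : ∀ x t L, IntegrableOn g (pPlus n p 0 x t L) volume := by
      intro x t L
      refine Integrable.mono (hfi x t L) ?_ (Filter.Eventually.of_forall fun y => ?_)
      · exact (Measurable.ite (measurableSet_lt measurable_const hfm.abs)
          hfm measurable_const).aestronglyMeasurable
      · simp only [hg, Real.norm_eq_abs]
        by_cases h : c < |f y|
        · rw [if_pos h]
        · rw [if_neg h]; simp [abs_nonneg]
    have hsub : {z | MO n p f z = ⊤} ⊆ {z | ENNReal.ofReal c < MO n p g z} := by
      intro z hz
      simp only [mem_setOf_eq] at hz ⊢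
      have htr := MO_le_truncate hp hfm hfi hc0.le z
      rw [hz] at htr
      by_contra hcon
      push_neg at hcon
      have : (⊤:ℝ≥0∞) ≤ ENNReal.ofReal c + ENNReal.ofReal c :=
        htr.trans (add_le_add_left hcon _)
      exact absurd this (by simp [← ENNReal.ofReal_add hc0.le hc0.le])
    have hw := weak_type hp hgi (lam := ENNReal.ofReal c)
      (by simp [ENNReal.ofReal_eq_zero]; linarith) ENNReal.ofReal_ne_top
    have hcut := cut_bound hq (f := f) hc0
    have hcq : ENNReal.ofReal (c ^ (1 - q)) ≤ 1 := by
      rw [show (1:ℝ≥0∞) = ENNReal.ofReal 1 by simp]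
      exact ENNReal.ofReal_le_ofReal
        (Real.rpow_le_one_of_one_le_of_nonpos hc1 (by linarith))
    calc ENNReal.ofReal c * μinf
        ≤ ENNReal.ofReal c * volume {z | ENNReal.ofReal c < MO n p g z} :=
          mul_le_mul_right (measure_mono hsub) _
      _ ≤ K * ∫⁻ z, ENNReal.ofReal |g z| := hw
      _ ≤ K * (ENNReal.ofReal (c ^ (1 - q)) * Iq) := mul_le_mul_right hcut _
      _ ≤ K * (1 * Iq) := mul_le_mul_right (mul_le_mul_left hcq _) _
      _ = D := by rw [one_mul]
  -- conclude
  by_contra hμ0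
  have hμfin : μinf ≠ ⊤ := by
    intro hcon
    have := hbound 1 le_rfl
    rw [hcon, ENNReal.ofReal_one, one_mul] at this
    exact hDt (top_le_iff.mp this)
  set c : ℝ := (D / μinf).toReal + 1 with hc
  have hDμt : D / μinf ≠ ⊤ := (ENNReal.div_lt_top hDt hμ0).ne
  have hc1 : 1 ≤ c := by
    rw [hc]
    have : 0 ≤ (D / μinf).toReal := ENNReal.toReal_nonneg
    linarith
  have hlt : D / μinf < ENNReal.ofReal c := by
    have hnn : 0 ≤ (D / μinf).toReal := ENNReal.toReal_nonneg
    calc D / μinf = ENNReal.ofReal ((D / μinf).toReal) :=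
          (ENNReal.ofReal_toReal hDμt).symm
      _ < ENNReal.ofReal c := by
          rw [hc]
          exact (ENNReal.ofReal_lt_ofReal_iff (by linarith)).2 (by linarith)
  have hcontr : D < ENNReal.ofReal c * μinf := by
    have := ENNReal.mul_lt_mul_left hμ0 hμfin hlt
    rwa [ENNReal.div_mul_cancel hμ0 hμfin] at this
  exact absurd (hbound c hc1) (not_le.mpr hcontr)

/-- Pointwise evaluation of the inner `t`-integral. -/
lemma inner_eval {q : ℝ} (hq : 1 < q) {a : ℝ} (ha : 0 ≤ a) :
    (∫⁻ t in Ioi (0:ℝ),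
        ENNReal.ofReal (2 * t ^ (q - 2)) * (if t < 2 * a then ENNReal.ofReal a else 0)) ≤
      ENNReal.ofReal (2 * 2 ^ (q - 1) / (q - 1)) * ENNReal.ofReal (a ^ q) := by
  rcases eq_or_lt_of_le ha with h0 | ha'
  · have hz : ∀ t ∈ Ioi (0:ℝ),
        ENNReal.ofReal (2 * t ^ (q - 2)) * (if t < 2 * a then ENNReal.ofReal a else 0) = 0 := by
      intro t ht
      rw [if_neg (by rw [← h0]; simpa using le_of_lt ht), mul_zero]
    calc (∫⁻ t in Ioi (0:ℝ), ENNReal.ofReal (2 * t ^ (q - 2)) *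
          (if t < 2 * a then ENNReal.ofReal a else 0))
        = ∫⁻ t in Ioi (0:ℝ), 0 := by
          refine setLIntegral_congr_fun measurableSet_Ioi ?_
          exact hz
      _ = 0 := lintegral_zero
      _ ≤ _ := by simp
  · have h2a : (0:ℝ) < 2 * a := by linarith
    have hrw : ∀ t : ℝ, ENNReal.ofReal (2 * t ^ (q - 2)) *
        (if t < 2 * a then ENNReal.ofReal a else 0) =
        (Iio (2 * a)).indicator (fun t => ENNReal.ofReal (2 * t ^ (q - 2)) * ENNReal.ofReal a)
          t := by
      intro t
      by_cases h : t < 2 * a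
      · rw [if_pos h, Set.indicator_of_mem (mem_Iio.2 h)]
      · rw [if_neg h, Set.indicator_of_notMem (by simpa using h), mul_zero]
    simp_rw [hrw]
    rw [lintegral_indicator measurableSet_Iio, Measure.restrict_restrict measurableSet_Iio,
      Set.inter_comm, Set.Ioi_inter_Iio]
    rw [lintegral_mul_const' _ _ ENNReal.ofReal_ne_top]
    have hInt : IntegrableOn (fun t : ℝ => 2 * t ^ (q - 2)) (Ioo 0 (2 * a)) volume := by
      have h1 := (intervalIntegral.intervalIntegrable_rpow'
        (by linarith : (-1:ℝ) < q - 2) (a := 0) (b := 2 * a)).1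
      exact (h1.mono_set Ioo_subset_Ioc_self).const_mul 2
    have hnn : 0 ≤ᵐ[volume.restrict (Ioo 0 (2 * a))] fun t : ℝ => 2 * t ^ (q - 2) := by
      filter_upwards [ae_restrict_mem measurableSet_Ioo] with t ht
      have ht0 : (0:ℝ) < t := ht.1
      positivity
    rw [← ofReal_integral_eq_lintegral_ofReal hInt hnn]
    have hcomp : ∫ t in Ioo 0 (2 * a), 2 * t ^ (q - 2) = 2 * ((2 * a) ^ (q - 1) / (q - 1)) := by
      rw [← integral_Ioc_eq_integral_Ioo, ← intervalIntegral.integral_of_le h2a.le,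
        intervalIntegral.integral_const_mul, integral_rpow (Or.inl (by linarith))]
      rw [Real.zero_rpow (by intro hcon; linarith [hcon] : q - 2 + 1 ≠ 0)]
      have : q - 2 + 1 = q - 1 := by ring
      rw [this, sub_zero]
    have hq1 : (0:ℝ) < q - 1 := by linarith
    have hnn1 : (0:ℝ) ≤ 2 * ((2 * a) ^ (q - 1) / (q - 1)) :=
      mul_nonneg (by norm_num) (div_nonneg (Real.rpow_nonneg (by linarith) _) hq1.le)
    have hnn2 : (0:ℝ) ≤ 2 * 2 ^ (q - 1) / (q - 1) :=
      div_nonneg (mul_nonneg (by norm_num) (Real.rpow_nonneg (by norm_num) _)) hq1.le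
    rw [hcomp, ← ENNReal.ofReal_mul hnn1, ← ENNReal.ofReal_mul hnn2]
    apply ENNReal.ofReal_le_ofReal
    have h2 : (2 * a) ^ (q - 1) = 2 ^ (q - 1) * a ^ (q - 1) :=
      Real.mul_rpow (by norm_num) ha
    have h3 : a ^ (q - 1) * a = a ^ q := by
      have e := (Real.rpow_add ha' (q - 1) 1).symm
      rw [Real.rpow_one] at e
      rw [e, show q - 1 + 1 = q by ring]
    refine le_of_eq ?_
    rw [h2]
    calc 2 * (2 ^ (q - 1) * a ^ (q - 1) / (q - 1)) * a
        = 2 * 2 ^ (q - 1) / (q - 1) * (a ^ (q - 1) * a) := by ring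
      _ = 2 * 2 ^ (q - 1) / (q - 1) * a ^ q := by rw [h3]

/-- Strong type estimate for `MO`. -/
lemma MO_strong (hp : 1 < p) {q : ℝ} (hq : 1 < q) {f : (Fin n → ℝ) × ℝ → ℝ}
    (hfm : Measurable f)
    (hfi : ∀ x t L, IntegrableOn f (pPlus n p 0 x t L) volume)
    (hIq : (∫⁻ z, ENNReal.ofReal (|f z| ^ q)) ≠ ⊤) :
    (∫⁻ z, MO n p f z ^ q) ≤
      ENNReal.ofReal (q * (2 * 6 ^ n * 6 ^ p) * (2 * 2 ^ (q - 1) / (q - 1))) *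
        ∫⁻ z, ENNReal.ofReal (|f z| ^ q) := by
  have hp0 : (0:ℝ) < p := lt_trans one_pos hp
  have hq0 : (0:ℝ) < q := lt_trans one_pos hq
  set Iq := ∫⁻ z, ENNReal.ofReal (|f z| ^ q) with hIqdef
  set K : ℝ≥0∞ := ENNReal.ofReal (2 * 6 ^ n * 6 ^ p) with hK
  set h : (Fin n → ℝ) × ℝ → ℝ≥0∞ := MO n p f with hh
  have hm : Measurable h := measurable_MO f
  have hinf : volume {z | h z = ⊤} = 0 := MO_ae_lt_top hp hq hfm hfi hIq
  have hae : ∀ᵐ z : (Fin n → ℝ) × ℝ, h z ≠ ⊤ := by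
    rw [ae_iff]
    simpa using hinf
  set F : (Fin n → ℝ) × ℝ → ℝ := fun z => (h z).toReal with hF
  have hFm : Measurable F := hm.ennreal_toReal
  have hFnn : 0 ≤ᵐ[volume] F := Filter.Eventually.of_forall fun z => ENNReal.toReal_nonneg
  have step1 : ∫⁻ z, h z ^ q = ∫⁻ z, ENNReal.ofReal (F z ^ q) := by
    refine lintegral_congr_ae ?_
    filter_upwards [hae] with z hz
    rw [hF, ← ENNReal.ofReal_rpow_of_nonneg ENNReal.toReal_nonneg hq0.le,
      ENNReal.ofReal_toReal hz]
  rw [step1, lintegral_rpow_eq_lintegral_meas_lt_mul volume hFnn hFm.aemeasurable hq0]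
  -- now bound the t-integral
  set G : ℝ → (Fin n → ℝ) × ℝ → ℝ≥0∞ := fun t z =>
    ENNReal.ofReal (2 * t ^ (q - 2)) * (if t < 2 * |f z| then ENNReal.ofReal |f z| else 0)
    with hG
  have hstep2 : (∫⁻ t in Ioi (0:ℝ), volume {z | t < F z} * ENNReal.ofReal (t ^ (q - 1))) ≤
      ∫⁻ t in Ioi (0:ℝ), K * ∫⁻ z, G t z := by
    refine lintegral_mono_ae ?_
    filter_upwards [ae_restrict_mem measurableSet_Ioi] with t ht
    have ht0 : (0:ℝ) < t := ht
    have ht2 : (0:ℝ) < t / 2 := by linarith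
    set w : ℝ≥0∞ := ENNReal.ofReal (t / 2) with hw
    have hw0 : w ≠ 0 := by
      rw [hw]; simp only [ne_eq, ENNReal.ofReal_eq_zero, not_le]; linarith
    have hwt : w ≠ ⊤ := ENNReal.ofReal_ne_top
    set g : (Fin n → ℝ) × ℝ → ℝ := fun y => if t / 2 < |f y| then f y else 0 with hg
    have hgi : ∀ x s L, IntegrableOn g (pPlus n p 0 x s L) volume := by
      intro x s L
      refine Integrable.mono (hfi x s L) ?_ (Filter.Eventually.of_forall fun y => ?_)
      · exact (Measurable.ite (measurableSet_lt measurable_const hfm.abs)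
          hfm measurable_const).aestronglyMeasurable
      · simp only [hg, Real.norm_eq_abs]
        by_cases hcy : t / 2 < |f y|
        · rw [if_pos hcy]
        · rw [if_neg hcy]; simp [abs_nonneg]
    -- measure bound
    have hmb : volume {z | t < F z} ≤ volume {z | w < MO n p g z} := by
      have hsub1 : {z | t < F z} ⊆ {z | ENNReal.ofReal t < h z} ∪ {z | h z = ⊤} := by
        intro z hz
        by_cases hzt : h z = ⊤
        · exact Or.inr hzt
        · refine Or.inl ?_
          simp only [mem_setOf_eq] at hz ⊢
          rw [← ENNReal.ofReal_toReal hzt]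
          exact ENNReal.ofReal_lt_ofReal_iff_of_nonneg ht0.le |>.2 hz
      have hsub2 : {z | ENNReal.ofReal t < h z} ⊆ {z | w < MO n p g z} := by
        intro z hz
        simp only [mem_setOf_eq] at hz ⊢
        have htr := MO_le_truncate hp hfm hfi ht2.le z
        by_contra hcon
        push_neg at hcon
        have h1 : h z ≤ w + w := htr.trans (add_le_add_left hcon _)
        have h2 : w + w = ENNReal.ofReal t := by
          rw [hw, ← ENNReal.ofReal_add ht2.le ht2.le]
          norm_num
        rw [h2] at h1
        exact absurd hz (not_lt.mpr h1)
      calc volume {z | t < F z}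
          ≤ volume ({z | ENNReal.ofReal t < h z} ∪ {z | h z = ⊤}) := measure_mono hsub1
        _ ≤ volume {z | ENNReal.ofReal t < h z} + volume {z | h z = ⊤} :=
            measure_union_le _ _
        _ = volume {z | ENNReal.ofReal t < h z} := by rw [hinf, add_zero]
        _ ≤ volume {z | w < MO n p g z} := measure_mono hsub2
    have hweak := weak_type hp hgi hw0 hwt
    -- rewrite ∫⁻ |g| as ∫⁻ with ite
    have hJg : (∫⁻ z, ENNReal.ofReal |g z|) =
        ∫⁻ z, (if t < 2 * |f z| then ENNReal.ofReal |f z| else 0) := by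
      refine lintegral_congr fun z => ?_
      by_cases hcz : t / 2 < |f z|
      · rw [hg]
        simp only [if_pos hcz, if_pos (by linarith : t < 2 * |f z|)]
      · rw [hg]
        have : ¬ t < 2 * |f z| := by
          push_neg at hcz ⊢
          linarith
        simp only [if_neg hcz, if_neg this, abs_zero, ENNReal.ofReal_zero]
    have hGrw : (∫⁻ z, G t z) =
        ENNReal.ofReal (2 * t ^ (q - 2)) *
          ∫⁻ z, (if t < 2 * |f z| then ENNReal.ofReal |f z| else 0) := by
      rw [hG]
      exact lintegral_const_mul' _ _ ENNReal.ofReal_ne_top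
    -- combine
    have hdivw : ENNReal.ofReal (t ^ (q - 1)) / w = ENNReal.ofReal (2 * t ^ (q - 2)) := by
      rw [hw, ← ENNReal.ofReal_div_of_pos ht2]
      congr 1
      have htq : t ^ (q - 1) = t ^ (q - 2) * t := by
        rw [show q - 1 = (q - 2) + 1 by ring, Real.rpow_add ht0, Real.rpow_one]
      rw [htq]
      field_simp
    have hμle : volume {z | w < MO n p g z} ≤ (K * ∫⁻ z, ENNReal.ofReal |g z|) / w :=
      (ENNReal.le_div_iff_mul_le (Or.inl hw0) (Or.inl hwt)).2 (by rw [mul_comm]; exact hweak)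
    calc volume {z | t < F z} * ENNReal.ofReal (t ^ (q - 1))
        ≤ ((K * ∫⁻ z, ENNReal.ofReal |g z|) / w) * ENNReal.ofReal (t ^ (q - 1)) :=
          mul_le_mul_left (hmb.trans hμle) _
      _ = K * ((∫⁻ z, ENNReal.ofReal |g z|) * (ENNReal.ofReal (t ^ (q - 1)) / w)) := by
          rw [div_eq_mul_inv, div_eq_mul_inv]
          ring
      _ = K * ∫⁻ z, G t z := by
          rw [hdivw, hGrw, hJg, mul_comm (∫⁻ z, (if t < 2 * |f z| then
            ENNReal.ofReal |f z| else 0))]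
  -- swap the integrals
  have hswap : (∫⁻ t in Ioi (0:ℝ), ∫⁻ z, G t z) = ∫⁻ z, ∫⁻ t in Ioi (0:ℝ), G t z := by
    refine lintegral_lintegral_swap ?_
    have hms : MeasurableSet {pr : ℝ × ((Fin n → ℝ) × ℝ) | pr.1 < 2 * |f pr.2|} :=
      measurableSet_lt measurable_fst ((hfm.comp measurable_snd).abs.const_mul 2)
    refine Measurable.aemeasurable ?_
    refine Measurable.mul ?_ ?_
    · refine Measurable.ennreal_ofReal ?_
      exact (Measurable.pow measurable_fst measurable_const).const_mul 2
    · refine Measurable.ite hms ?_ measurable_const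
      exact ((hfm.comp measurable_snd).abs).ennreal_ofReal
  have hinner : ∀ z : (Fin n → ℝ) × ℝ, (∫⁻ t in Ioi (0:ℝ), G t z) ≤
      ENNReal.ofReal (2 * 2 ^ (q - 1) / (q - 1)) * ENNReal.ofReal (|f z| ^ q) :=
    fun z => inner_eval hq (abs_nonneg (f z))
  calc ENNReal.ofReal q * ∫⁻ t in Ioi (0:ℝ), volume {z | t < F z} * ENNReal.ofReal (t ^ (q - 1))
      ≤ ENNReal.ofReal q * ∫⁻ t in Ioi (0:ℝ), K * ∫⁻ z, G t z :=
        mul_le_mul_right hstep2 _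
    _ = ENNReal.ofReal q * (K * ∫⁻ t in Ioi (0:ℝ), ∫⁻ z, G t z) := by
        rw [lintegral_const_mul' _ _ ENNReal.ofReal_ne_top]
    _ = ENNReal.ofReal q * (K * ∫⁻ z, ∫⁻ t in Ioi (0:ℝ), G t z) := by rw [hswap]
    _ ≤ ENNReal.ofReal q * (K * ∫⁻ z, ENNReal.ofReal (2 * 2 ^ (q - 1) / (q - 1)) *
          ENNReal.ofReal (|f z| ^ q)) := by
        refine mul_le_mul_right (mul_le_mul_right (lintegral_mono hinner) _) _
    _ = ENNReal.ofReal q * (K * (ENNReal.ofReal (2 * 2 ^ (q - 1) / (q - 1)) * Iq)) := by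
        rw [lintegral_const_mul' _ _ ENNReal.ofReal_ne_top]
    _ = ENNReal.ofReal (q * (2 * 6 ^ n * 6 ^ p) * (2 * 2 ^ (q - 1) / (q - 1))) * Iq := by
        rw [hK, ← mul_assoc, ← mul_assoc, ← ENNReal.ofReal_mul hq0.le,
          ← ENNReal.ofReal_mul (mul_nonneg hq0.le (by positivity))]

end ParabolicAux

open ParabolicAux

/-- The parabolic maximal operator `M^+` is bounded on `L^q` for `1 < q < ∞`. -/
theorem stmt_11 (n : ℕ) (p : ℝ) (hp : 1 < p) (q : ℝ) (hq : 1 < q) :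
    ∃ c > (0 : ℝ), ∀ f : (Fin n → ℝ) × ℝ → ℝ, MeasureTheory.LocallyIntegrable f volume →
      (∫⁻ z, Mplus n p f z ^ q) ≤
        ENNReal.ofReal c * ∫⁻ z, ENNReal.ofReal (|f z| ^ q) := by
  have hq0 : (0:ℝ) < q := lt_trans one_pos hq
  have hcp : (0:ℝ) < ((2:ℝ) ^ n * 2 ^ p) ^ q *
      (q * (2 * 6 ^ n * 6 ^ p) * (2 * 2 ^ (q - 1) / (q - 1))) := by
    have h1 : (0:ℝ) < ((2:ℝ) ^ n * 2 ^ p) ^ q :=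
      Real.rpow_pos_of_pos (by positivity) q
    have h2 : (0:ℝ) < q * (2 * 6 ^ n * 6 ^ p) := by positivity
    have h3 : (0:ℝ) < 2 * 2 ^ (q - 1) / (q - 1) := by
      apply div_pos (by positivity) (by linarith)
    exact mul_pos h1 (mul_pos h2 h3)
  refine ⟨((2:ℝ) ^ n * 2 ^ p) ^ q * (q * (2 * 6 ^ n * 6 ^ p) * (2 * 2 ^ (q - 1) / (q - 1))),
    hcp, ?_⟩
  intro f hf
  set c : ℝ := ((2:ℝ) ^ n * 2 ^ p) ^ q * (q * (2 * 6 ^ n * 6 ^ p) * (2 * 2 ^ (q - 1) / (q - 1)))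
    with hc
  have hcpos : 0 < c := hcp
  -- replace f by a measurable representative
  obtain ⟨f', hsm, haef⟩ := hf.aestronglyMeasurable
  have hfm' : Measurable f' := hsm.measurable
  have hfi' : ∀ x t L, IntegrableOn f' (pPlus n p 0 x t L) volume := fun x t L =>
    (integrableOn_pPlus hf x t L).congr_fun_ae (ae_restrict_of_ae haef)
  have havg : ∀ S : Set ((Fin n → ℝ) × ℝ), (⨍ y in S, |f y|) = ⨍ y in S, |f' y| := by
    intro S
    refine average_congr (ae_restrict_of_ae (haef.mono fun y hy => ?_))
    show |f y| = |f' y|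
    rw [hy]
  have hMeq : Mplus n p f = Mplus n p f' := by
    funext z
    simp only [Mplus, havg]
  have hIeq : (∫⁻ z, ENNReal.ofReal (|f z| ^ q)) = ∫⁻ z, ENNReal.ofReal (|f' z| ^ q) := by
    refine lintegral_congr_ae ?_
    filter_upwards [haef] with z hz
    rw [hz]
  rw [hMeq, hIeq]
  set Iq := ∫⁻ z, ENNReal.ofReal (|f' z| ^ q) with hIq
  by_cases hItop : Iq = ⊤
  · rw [hItop, ENNReal.mul_top (by simp [ENNReal.ofReal_eq_zero]; linarith)]
    exact le_top
  -- main chain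
  set c1 : ℝ≥0∞ := ENNReal.ofReal ((2:ℝ) ^ n * 2 ^ p) with hc1
  have hpt : ∀ z, Mplus n p f' z ^ q ≤ (c1 * MO n p f' z) ^ q := fun z =>
    ENNReal.rpow_le_rpow (Mplus_le_MO hp hfi' z) hq0.le
  have hc1t : c1 ^ q ≠ ⊤ :=
    ENNReal.rpow_ne_top_of_nonneg hq0.le ENNReal.ofReal_ne_top
  calc (∫⁻ z, Mplus n p f' z ^ q)
      ≤ ∫⁻ z, (c1 * MO n p f' z) ^ q := lintegral_mono hpt
    _ = ∫⁻ z, c1 ^ q * MO n p f' z ^ q := by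
        refine lintegral_congr fun z => ?_
        rw [ENNReal.mul_rpow_of_nonneg _ _ hq0.le]
    _ = c1 ^ q * ∫⁻ z, MO n p f' z ^ q := lintegral_const_mul' _ _ hc1t
    _ ≤ c1 ^ q * (ENNReal.ofReal (q * (2 * 6 ^ n * 6 ^ p) * (2 * 2 ^ (q - 1) / (q - 1))) *
          Iq) := mul_le_mul_right (MO_strong hp hq hfm' hfi' hItop) _
    _ = ENNReal.ofReal c * Iq := by
        rw [hc1, ENNReal.ofReal_rpow_of_nonneg (by positivity) hq0.le, hc,
          ← mul_assoc, ← ENNReal.ofReal_mul (by positivity)]
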